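/- Let τ be a point of the complex upper half plane ℍ, and let μ ∈ M₂(ℝ) satisfy tr(μ) = 0 and det(μ) > 0 (equivalently, μ² = −det(μ)·I with det(μ) > 0; in particular μ is invertible). Let J_τ : M₂(ℝ) → M₂(ℝ) be the ℝ-linear map characterized by Φ_τ(J_τ(A)) = i·Φ_τ(A) for all A (well defined since Φ_τ is bijective); then J_τ² = −id. Define the ℝ-bilinear form E on M₂(ℝ) by E(A, A′) = tr(μ⁻¹ · A · (A′)^*). Then: (i) E is alternating, i.e., E(A, A) = 0 for all A; (ii) E(J_τ(A), J_τ(A′)) = E(A, A′) for all A, A′; and (iii) the bilinear form (A, A′) ↦ E(A, J_τ(A′)) is symmetric, and either it or its negative is positive definite. -/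

import Mathlib

set_option maxHeartbeats 1000000


open Matrix Complex

/-- The ℝ-linear map `Φ_τ : M₂(ℝ) → ℂ²`, sending `A = (a b; c d)` to
`A·(τ, 1)ᵗ = (aτ + b, cτ + d)`. -/
noncomputable def PhiL (τ : ℂ) : Matrix (Fin 2) (Fin 2) ℝ →ₗ[ℝ] (Fin 2 → ℂ) where
  toFun A := fun i => (A i 0 : ℂ) * τ + (A i 1 : ℂ)
  map_add' A B := by
    funext i
    simp only [Matrix.add_apply, Pi.add_apply, Complex.ofReal_add]
    ring
  map_smul' c A := by
    funext i
    simp only [Matrix.smul_apply, Pi.smul_apply, smul_eq_mul, Complex.ofReal_mul,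
      RingHom.id_apply, Complex.real_smul]
    ring

/-- The ℝ-bilinear form `E(A, A′) = tr(μ⁻¹·A·(A′)^*)` on `M₂(ℝ)`, where `(A′)^*` is the
standard involution (adjugate). -/
noncomputable def Eform (μ A A' : Matrix (Fin 2) (Fin 2) ℝ) : ℝ :=
  (μ⁻¹ * A * A'.adjugate).trace

/-- Let `τ ∈ ℍ` and `μ ∈ M₂(ℝ)` with `tr μ = 0`, `det μ > 0`, and let `J_τ`
be the ℝ-linear endomorphism of `M₂(ℝ)` with `Φ_τ(J_τ(A)) = i·Φ_τ(A)`.  Then `J_τ² = −id`, and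
the form `E(A, A′) = tr(μ⁻¹·A·(A′)^*)` is alternating, `J_τ`-invariant, the form
`(A, A′) ↦ E(A, J_τ(A′))` is symmetric, and either it or its negative is positive definite. -/
theorem riemann_form_twisted (τ : ℂ) (hτ : 0 < τ.im)
    (μ : Matrix (Fin 2) (Fin 2) ℝ) (htr : μ.trace = 0) (hdet : 0 < μ.det)
    (J : Matrix (Fin 2) (Fin 2) ℝ →ₗ[ℝ] Matrix (Fin 2) (Fin 2) ℝ)
    (hJ : ∀ A, PhiL τ (J A) = Complex.I • PhiL τ A) :
    (∀ A, J (J A) = -A) ∧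
    (∀ A, Eform μ A A = 0) ∧
    (∀ A A', Eform μ (J A) (J A') = Eform μ A A') ∧
    (∀ A A', Eform μ A (J A') = Eform μ A' (J A)) ∧
    ((∀ A, A ≠ 0 → 0 < Eform μ A (J A)) ∨ (∀ A, A ≠ 0 → Eform μ A (J A) < 0)) := by
  have hy : τ.im ≠ 0 := ne_of_gt hτ
  have hd : μ.det ≠ 0 := ne_of_gt hdet
  have h11 : μ 1 1 = -μ 0 0 := by
    have := htr
    simp only [Matrix.trace, Matrix.diag, Fin.sum_univ_two] at this
    linarith
  have hdd : μ.det = -μ 0 0 ^ 2 - μ 0 1 * μ 1 0 := by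
    rw [Matrix.det_fin_two, h11]; ring
  set x := τ.re with hx
  set y := τ.im with hyy
  -- the explicit matrix realizing J
  have hJT : ∀ A, J A = A * !![x/y, -(x*x+y*y)/y; 1/y, -x/y] := by
    intro A
    have h0 : ∀ i, ((J A i 0 : ℂ)) * τ + (J A i 1 : ℂ)
        = Complex.I * ((A i 0 : ℂ) * τ + (A i 1 : ℂ)) := by
      intro i
      have := congrFun (hJ A) i
      simpa [PhiL, Pi.smul_apply, smul_eq_mul] using this
    ext i j
    have him := congrArg Complex.im (h0 i)
    have hre := congrArg Complex.re (h0 i)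
    simp only [Complex.add_im, Complex.add_re, Complex.mul_im, Complex.mul_re,
      Complex.I_re, Complex.I_im, Complex.ofReal_re, Complex.ofReal_im] at him hre
    fin_cases j <;>
      simp only [Matrix.mul_apply, Fin.sum_univ_two, Matrix.cons_val', Matrix.of_apply, Matrix.cons_val_zero,
        Matrix.cons_val_one, Matrix.head_cons, Matrix.head_fin_const, Matrix.empty_val',
        Matrix.cons_val_fin_one, Fin.mk_zero, Fin.mk_one] <;>
      field_simp
    · linear_combination him
    · linear_combination y * hre - x * him
  -- a denominator-free formula for Eform
  have hE : ∀ A B : Matrix (Fin 2) (Fin 2) ℝ,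
      Eform μ A B = (μ.adjugate * A * B.adjugate).trace / μ.det := by
    intro A B
    rw [Eform, Matrix.inv_def, Ring.inverse_eq_inv', Matrix.smul_mul, Matrix.smul_mul,
      Matrix.trace_smul, smul_eq_mul, div_eq_inv_mul]
  refine ⟨?_, ?_, ?_, ?_, ?_⟩
  · -- J ∘ J = -id
    intro A
    rw [hJT, hJT, Matrix.mul_assoc]
    ext i j
    simp only [Matrix.mul_apply, Fin.sum_univ_two, Matrix.neg_apply, Matrix.cons_val', Matrix.of_apply,
      Matrix.cons_val_zero, Matrix.cons_val_one, Matrix.head_cons, Matrix.head_fin_const,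
      Matrix.empty_val', Matrix.cons_val_fin_one]
    fin_cases j <;> simp only [Fin.zero_eta, Fin.mk_one, Matrix.cons_val_zero, Matrix.cons_val_one, Matrix.head_cons] <;> field_simp <;> ring
  · -- alternating
    intro A
    rw [hE]
    simp only [Matrix.trace, Matrix.diag, Fin.sum_univ_two, Matrix.mul_apply,
      Matrix.adjugate_fin_two, Matrix.cons_val', Matrix.of_apply, Matrix.cons_val_zero,
      Matrix.cons_val_one, Matrix.head_cons, Matrix.empty_val', Matrix.cons_val_fin_one,
      Matrix.head_fin_const, h11]
    field_simp
    ring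
  · -- J-invariance
    intro A A'
    rw [hJT, hJT, hE, hE]
    simp only [Matrix.trace, Matrix.diag, Fin.sum_univ_two, Matrix.mul_apply,
      Matrix.adjugate_fin_two, Matrix.cons_val', Matrix.of_apply, Matrix.cons_val_zero,
      Matrix.cons_val_one, Matrix.head_cons, Matrix.empty_val', Matrix.cons_val_fin_one,
      Matrix.head_fin_const, h11]
    field_simp
    ring
  · -- symmetry
    intro A A'
    rw [hJT, hJT, hE, hE]
    simp only [Matrix.trace, Matrix.diag, Fin.sum_univ_two, Matrix.mul_apply,
      Matrix.adjugate_fin_two, Matrix.cons_val', Matrix.of_apply, Matrix.cons_val_zero,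
      Matrix.cons_val_one, Matrix.head_cons, Matrix.empty_val', Matrix.cons_val_fin_one,
      Matrix.head_fin_const, h11]
    field_simp
    ring
  · -- definiteness
    have key : ∀ A : Matrix (Fin 2) (Fin 2) ℝ,
        Eform μ A (J A) * (μ.det * y * μ 0 1) =
          (μ 0 1 * (A 1 0 * x + A 1 1) + μ 0 0 * (A 0 0 * x + A 0 1)) ^ 2
          + μ.det * (A 0 0 * x + A 0 1) ^ 2
          + (μ 0 1 * (A 1 0 * y) + μ 0 0 * (A 0 0 * y)) ^ 2
          + μ.det * (A 0 0 * y) ^ 2 := by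
      intro A
      rw [hJT, hE, div_mul_eq_mul_div, div_eq_iff hd, hdd]
      simp only [Matrix.trace, Matrix.diag, Fin.sum_univ_two, Matrix.mul_apply,
        Matrix.adjugate_fin_two, Matrix.cons_val', Matrix.of_apply, Matrix.cons_val_zero,
        Matrix.cons_val_one, Matrix.head_cons, Matrix.empty_val', Matrix.cons_val_fin_one,
        Matrix.head_fin_const, h11]
      field_simp
      ring
    have hq : μ 0 1 ≠ 0 := by
      intro h
      rw [hdd, h] at hdet
      nlinarith [sq_nonneg (μ 0 0)]
    have keypos : ∀ A : Matrix (Fin 2) (Fin 2) ℝ, A ≠ 0 →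
        0 < (μ 0 1 * (A 1 0 * x + A 1 1) + μ 0 0 * (A 0 0 * x + A 0 1)) ^ 2
          + μ.det * (A 0 0 * x + A 0 1) ^ 2
          + (μ 0 1 * (A 1 0 * y) + μ 0 0 * (A 0 0 * y)) ^ 2
          + μ.det * (A 0 0 * y) ^ 2 := by
      intro A hA
      by_contra hc
      push_neg at hc
      have s1 : (0:ℝ) ≤ (μ 0 1 * (A 1 0 * x + A 1 1) + μ 0 0 * (A 0 0 * x + A 0 1)) ^ 2 :=
        sq_nonneg _
      have s2 : (0:ℝ) ≤ μ.det * (A 0 0 * x + A 0 1) ^ 2 :=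
        mul_nonneg hdet.le (sq_nonneg _)
      have s3 : (0:ℝ) ≤ (μ 0 1 * (A 1 0 * y) + μ 0 0 * (A 0 0 * y)) ^ 2 := sq_nonneg _
      have s4 : (0:ℝ) ≤ μ.det * (A 0 0 * y) ^ 2 := mul_nonneg hdet.le (sq_nonneg _)
      have t4 : μ.det * (A 0 0 * y) ^ 2 = 0 := le_antisymm (by linarith) s4
      have ha : A 0 0 = 0 := by
        have h := (mul_eq_zero.1 t4).resolve_left hd
        have h2 := sq_eq_zero_iff.1 h
        exact (mul_eq_zero.1 h2).resolve_right hy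
      have t2 : μ.det * (A 0 0 * x + A 0 1) ^ 2 = 0 := le_antisymm (by linarith) s2
      have hb : A 0 1 = 0 := by
        have h := (mul_eq_zero.1 t2).resolve_left hd
        have h2 := sq_eq_zero_iff.1 h
        rw [ha] at h2
        linarith
      have t3 : (μ 0 1 * (A 1 0 * y) + μ 0 0 * (A 0 0 * y)) ^ 2 = 0 :=
        le_antisymm (by linarith) s3
      have hcc : A 1 0 = 0 := by
        have h2 := sq_eq_zero_iff.1 t3
        rw [ha] at h2
        have h3 : μ 0 1 * (A 1 0 * y) = 0 := by linarith
        have h4 := (mul_eq_zero.1 h3).resolve_left hq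
        exact (mul_eq_zero.1 h4).resolve_right hy
      have t1 : (μ 0 1 * (A 1 0 * x + A 1 1) + μ 0 0 * (A 0 0 * x + A 0 1)) ^ 2 = 0 :=
        le_antisymm (by linarith) s1
      have he : A 1 1 = 0 := by
        have h2 := sq_eq_zero_iff.1 t1
        rw [ha, hb, hcc] at h2
        have h3 : μ 0 1 * A 1 1 = 0 := by linarith
        exact (mul_eq_zero.1 h3).resolve_left hq
      apply hA
      ext i j
      fin_cases i <;> fin_cases j <;> simpa using ‹_›
    rcases hq.lt_or_gt with hql | hqg
    · right
      intro A hA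
      have hK : μ.det * y * μ 0 1 < 0 :=
        mul_neg_of_pos_of_neg (mul_pos hdet hτ) hql
      nlinarith [key A, keypos A hA, hK]
    · left
      intro A hA
      have hK : 0 < μ.det * y * μ 0 1 := mul_pos (mul_pos hdet hτ) hqg
      nlinarith [key A, keypos A hA, hK]
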